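/- Let f ∈ K[x_1,...,x_n] be a form such that g = x_1⋯x_n·f is reduced, and set y_i = x_1⋯x_n/x_i. If (α_1,...,α_n) is a syzygy of the gradient ∇g (i.e., Σ_i α_i ∂g/∂x_i = 0), then x_i divides α_i for every i, and (α_1/x_1, ..., α_n/x_n) is a syzygy of (x_1 f_1 + f, ..., x_n f_n + f), where f_i = ∂f/∂x_i. -/

import Mathlib

open MvPolynomial

private lemma my_pderiv_prod_X_zero {K : Type*} [CommRing K] {n : ℕ}
    (i : Fin n) (s : Finset (Fin n)) (hi : i ∉ s) :
    pderiv i (∏ j ∈ s, X j : MvPolynomial (Fin n) K) = 0 := by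
  induction s using Finset.induction_on with
  | empty => simp
  | @insert a s' ha ih =>
    rw [Finset.prod_insert ha, pderiv_mul,
      ih (fun h => hi (Finset.mem_insert_of_mem h)),
      pderiv_X_of_ne (fun h : a = i => hi (h ▸ Finset.mem_insert_self a s'))]
    ring

private lemma my_prime_X {K : Type*} [Field K] {n : ℕ} (i : Fin n) :
    Prime (X i : MvPolynomial (Fin n) K) := by
  have h := MvPolynomial.prime_rename_iff (R := K) ({i} : Set (Fin n))
      (p := (X ⟨i, rfl⟩ : MvPolynomial ({i} : Set (Fin n)) K))
  rw [rename_X] at h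
  haveI : Unique ({i} : Set (Fin n)) := Set.uniqueSingleton i
  have hc : ((⟨i, rfl⟩ : ({i} : Set (Fin n))) : Fin n) = i := rfl
  rw [hc] at h
  rw [h]
  let e : MvPolynomial ({i} : Set (Fin n)) K ≃ₐ[K] Polynomial K :=
    (renameEquiv K (Equiv.equivPUnit.{1, 1} ({i} : Set (Fin n)))).trans (pUnitAlgEquiv K)
  rw [← MulEquiv.prime_iff e.toMulEquiv]
  have : e.toMulEquiv (X ⟨i, rfl⟩) = Polynomial.X := by
    simp [e, renameEquiv_apply, rename_X]
  rw [this]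
  exact Polynomial.prime_X

/-- let `f` be a form such that `g = x_1⋯x_n · f` is reduced. If
`(α_1,…,α_n)` is a syzygy of the gradient `∇g`, then `x_i ∣ α_i` for every `i`,
and the quotients `β_i = α_i / x_i` form a syzygy of
`(x_1 f_1 + f, …, x_n f_n + f)`. -/
theorem stmt_8 {K : Type*} [Field K] [CharZero K] {n d : ℕ}
    (f : MvPolynomial (Fin n) K) (hhom : f.IsHomogeneous d)
    (hred : Squarefree ((∏ i : Fin n, X i) * f))
    (α : Fin n → MvPolynomial (Fin n) K)
    (hsyz : ∑ i, α i * pderiv i ((∏ j : Fin n, X j) * f) = 0) :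
    (∀ i, X i ∣ α i) ∧
    ∃ β : Fin n → MvPolynomial (Fin n) K,
      (∀ i, α i = X i * β i) ∧
      ∑ i, β i * (X i * pderiv i f + f) = 0 := by
  classical
  set Y : Fin n → MvPolynomial (Fin n) K :=
    fun i => ∏ j ∈ Finset.univ.erase i, X j with hY
  have hPY : ∀ i : Fin n, (∏ j : Fin n, X j) = X i * Y i := by
    intro i
    rw [hY, Finset.mul_prod_erase _ _ (Finset.mem_univ i)]
  have hderiv : ∀ i : Fin n,
      pderiv i ((∏ j : Fin n, X j) * f) = Y i * (X i * pderiv i f + f) := by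
    intro i
    rw [pderiv_mul, hPY i, pderiv_mul, pderiv_X_self,
      my_pderiv_prod_X_zero i _ (Finset.notMem_erase i _)]
    ring
  -- rewrite the syzygy
  rw [show (∑ i, α i * pderiv i ((∏ j : Fin n, X j) * f))
        = ∑ i, α i * (Y i * (X i * pderiv i f + f)) from
      Finset.sum_congr rfl fun i _ => by rw [hderiv i]] at hsyz
  -- X i does not divide Y i * f
  have hnd : ∀ i : Fin n, ¬ (X i ∣ Y i * f) := by
    intro i hdvd
    have : X i * X i ∣ (∏ j : Fin n, X j) * f := by
      rw [hPY i, mul_assoc]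
      exact mul_dvd_mul_left (X i) hdvd
    exact (my_prime_X (K := K) i).not_unit (hred _ this)
  -- X i divides Y j for j ≠ i
  have hXY : ∀ i j : Fin n, j ≠ i → X i ∣ Y j := by
    intro i j hji
    exact Finset.dvd_prod_of_mem _ (Finset.mem_erase.mpr ⟨Ne.symm hji, Finset.mem_univ i⟩)
  -- divisibility
  have hdvd : ∀ i : Fin n, X i ∣ α i := by
    intro i
    have h1 : X i ∣ α i * (Y i * (X i * pderiv i f + f)) := by
      have : α i * (Y i * (X i * pderiv i f + f))
          = - ∑ j ∈ Finset.univ.erase i, α j * (Y j * (X j * pderiv j f + f)) := by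
        rw [← Finset.add_sum_erase _ _ (Finset.mem_univ i)] at hsyz
        linear_combination hsyz
      rw [this]
      refine dvd_neg.mpr (Finset.dvd_sum fun j hj => ?_)
      exact Dvd.dvd.mul_left
        (Dvd.dvd.mul_right (hXY i j (Finset.mem_erase.mp hj).1) _) _
    have h2 : X i ∣ α i * (Y i * f) := by
      have : α i * (Y i * f)
          = α i * (Y i * (X i * pderiv i f + f)) - X i * (α i * (Y i * pderiv i f)) := by
        ring
      rw [this]
      exact dvd_sub h1 (Dvd.intro _ rfl)
    rcases (my_prime_X (K := K) i).2.2 _ _ h2 with h | h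
    · exact h
    · exact absurd h (hnd i)
  refine ⟨hdvd, ?_⟩
  choose β hβ using fun i => hdvd i
  refine ⟨β, hβ, ?_⟩
  have hP0 : (∏ j : Fin n, X j : MvPolynomial (Fin n) K) ≠ 0 := by
    apply Finset.prod_ne_zero_iff.mpr
    intro j _
    exact (my_prime_X (K := K) j).ne_zero
  have key : (∏ j : Fin n, X j) * (∑ i, β i * (X i * pderiv i f + f)) = 0 := by
    rw [Finset.mul_sum]
    rw [show (0 : MvPolynomial (Fin n) K)
        = ∑ i, α i * (Y i * (X i * pderiv i f + f)) from hsyz.symm]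
    refine Finset.sum_congr rfl fun i _ => ?_
    rw [hPY i, hβ i]
    ring
  exact (mul_eq_zero.mp key).resolve_left hP0
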